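/- arXiv:2003.01058 — 2 statements merged into one kernel-verified Lean document; each statement's English description precedes it below -/
import Mathlib

section
/- Let S be a sparse collection of cubes contained in a dyadic lattice of ℝ^d. Then S can be written as a union S = ∪_{i=1}^{8} S^i of eight subcollections, each of which satisfies the stronger sparsity condition: for every Q ∈ S^i, the union of all cubes Q' ∈ S^i with Q' ⊊ Q has Lebesgue measure at most ¼|Q|. -/
open MeasureTheory ENNReal Set

noncomputable section

/-- An axis-parallel half-open cube in `ℝ^d`. -/
structure Cube (d : ℕ) where
  corner : Fin d → ℝ
  side : ℝ
  side_pos : 0 < side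

/-- The underlying set of a cube. -/
def Cube.toSet {d : ℕ} (Q : Cube d) : Set (Fin d → ℝ) :=
  {x | ∀ i, Q.corner i ≤ x i ∧ x i < Q.corner i + Q.side}

/-- A dyadic lattice of `ℝ^d`: a collection of cubes whose sidelengths are integer
powers of `2`, in which any two cubes are nested or disjoint, and in which every
cube has a parent of twice its sidelength. -/
def IsDyadicLattice {d : ℕ} (D : Set (Cube d)) : Prop :=
  (∀ Q ∈ D, ∃ k : ℤ, Q.side = 2 ^ k) ∧
  (∀ Q ∈ D, ∀ Q' ∈ D,
    Q.toSet ⊆ Q'.toSet ∨ Q'.toSet ⊆ Q.toSet ∨ Disjoint Q.toSet Q'.toSet) ∧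
  (∀ Q ∈ D, ∃ Q' ∈ D, Q.toSet ⊆ Q'.toSet ∧ Q'.side = 2 * Q.side)

namespace Cube

variable {d : ℕ} {Q Q' : Cube d}

lemma corner_mem (Q : Cube d) : Q.corner ∈ Q.toSet :=
  fun i => ⟨le_rfl, by linarith [Q.side_pos]⟩

lemma toSet_nonempty (Q : Cube d) : Q.toSet.Nonempty := ⟨Q.corner, Q.corner_mem⟩

lemma toSet_eq_pi (Q : Cube d) :
    Q.toSet = Set.pi Set.univ fun i => Set.Ico (Q.corner i) (Q.corner i + Q.side) := by
  ext x; simp [Cube.toSet, Set.mem_pi, Set.mem_Ico]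

lemma measurableSet_toSet (Q : Cube d) : MeasurableSet Q.toSet := by
  rw [toSet_eq_pi]
  exact MeasurableSet.pi (Set.countable_univ) fun i _ => measurableSet_Ico

lemma volume_toSet (Q : Cube d) : volume Q.toSet = ENNReal.ofReal Q.side ^ d := by
  rw [toSet_eq_pi, volume_pi_pi]
  simp [Real.volume_Ico]

lemma volume_toSet_ne_top (Q : Cube d) : volume Q.toSet ≠ ∞ := by
  rw [volume_toSet]; exact (pow_ne_top ofReal_ne_top)

lemma volume_toSet_pos (Q : Cube d) : 0 < volume Q.toSet := by
  rw [volume_toSet]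
  exact ENNReal.pow_pos (ENNReal.ofReal_pos.2 Q.side_pos) d

lemma bounds_of_subset (h : Q.toSet ⊆ Q'.toSet) (i : Fin d) :
    Q'.corner i ≤ Q.corner i ∧ Q.corner i + Q.side ≤ Q'.corner i + Q'.side := by
  constructor
  · exact (h Q.corner_mem i).1
  · by_contra hlt
    push_neg at hlt
    set x : Fin d → ℝ := Function.update Q.corner i (max (Q.corner i) (Q'.corner i + Q'.side))
      with hx
    have hxQ : x ∈ Q.toSet := by
      intro j
      rcases eq_or_ne j i with rfl | hj
      · simp only [hx, Function.update_self]
        exact ⟨le_max_left _ _, max_lt (by linarith [Q.side_pos]) hlt⟩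
      · simp only [hx, Function.update_of_ne hj]
        exact ⟨le_rfl, by linarith [Q.side_pos]⟩
    have := (h hxQ i).2
    simp only [hx, Function.update_self] at this
    have := le_max_right (Q.corner i) (Q'.corner i + Q'.side)
    linarith

lemma side_le_of_subset (i₀ : Fin d) (h : Q.toSet ⊆ Q'.toSet) : Q.side ≤ Q'.side := by
  obtain ⟨h1, h2⟩ := bounds_of_subset h i₀
  linarith

lemma eq_of_subset_of_side_le (i₀ : Fin d) (h : Q.toSet ⊆ Q'.toSet)
    (hs : Q'.side ≤ Q.side) : Q = Q' := by
  have hss : Q.side = Q'.side := le_antisymm (side_le_of_subset i₀ h) hs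
  have hc : ∀ i, Q.corner i = Q'.corner i := by
    intro i
    obtain ⟨h1, h2⟩ := bounds_of_subset h i
    linarith
  cases Q; cases Q'
  simp_all
  exact funext hc

lemma toSet_inj (i₀ : Fin d) (h : Q.toSet = Q'.toSet) : Q = Q' := by
  refine eq_of_subset_of_side_le i₀ h.le ?_
  exact side_le_of_subset i₀ h.ge

lemma ssubset_of_subset_of_ne (i₀ : Fin d) (h : Q.toSet ⊆ Q'.toSet) (hne : Q ≠ Q') :
    Q.toSet ⊂ Q'.toSet :=
  h.ssubset_of_ne fun he => hne (toSet_inj i₀ he)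

end Cube

section Lattice

variable {d : ℕ} {S D : Set (Cube d)}

lemma comparable_of_mem (hD : IsDyadicLattice D) {P P' : Cube d} (hP : P ∈ D) (hP' : P' ∈ D)
    (hx : (P.toSet ∩ P'.toSet).Nonempty) : P.toSet ⊆ P'.toSet ∨ P'.toSet ⊆ P.toSet := by
  rcases hD.2.1 P hP P' hP' with h | h | h
  · exact Or.inl h
  · exact Or.inr h
  · exact absurd (Set.not_disjoint_iff_nonempty_inter.2 hx) (fun hc => hc h)

/-- ancestors of `Q'` inside `Q`, within the family `S` -/
def anc (S : Set (Cube d)) (Q' Q : Cube d) : Set (Cube d) :=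
  {P | P ∈ S ∧ Q'.toSet ⊂ P.toSet ∧ P.toSet ⊆ Q.toSet}

lemma anc_finite (i₀ : Fin d) (hD : IsDyadicLattice D) (hSD : S ⊆ D) {Q' Q : Cube d}
    (hQ' : Q' ∈ D) : (anc S Q' Q).Finite := by
  obtain ⟨k', hk'⟩ := hD.1 Q' hQ'
  -- choose n with Q.side ≤ 2 ^ (k' + n)
  obtain ⟨n, hn⟩ : ∃ n : ℕ, Q.side ≤ 2 ^ (k' + (n : ℤ)) := by
    obtain ⟨n, hn⟩ := pow_unbounded_of_one_lt (Q.side / 2 ^ k') (one_lt_two (α := ℝ))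
    refine ⟨n, ?_⟩
    rw [zpow_add₀ (by norm_num : (2:ℝ) ≠ 0)]
    rw [div_lt_iff₀ (by positivity)] at hn
    calc Q.side ≤ 2 ^ (n:ℤ) * 2 ^ k' := by
          rw [zpow_natCast]; linarith
      _ = 2 ^ k' * 2 ^ (n:ℤ) := by ring
  have hinj : Set.InjOn Cube.side (anc S Q' Q) := by
    intro P1 h1 P2 h2 hside
    have hcomp := comparable_of_mem hD (hSD h1.1) (hSD h2.1)
      ⟨Q'.corner, h1.2.1.le Q'.corner_mem, h2.2.1.le Q'.corner_mem⟩
    rcases hcomp with h | h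
    · exact Cube.eq_of_subset_of_side_le i₀ h hside.ge
    · exact (Cube.eq_of_subset_of_side_le i₀ h hside.le).symm
  have himage : Cube.side '' (anc S Q' Q) ⊆ (fun k : ℤ => (2:ℝ) ^ k) '' (Set.Ioc k' (k' + n)) := by
    rintro - ⟨P, hP, rfl⟩
    obtain ⟨kP, hkP⟩ := hD.1 P (hSD hP.1)
    refine ⟨kP, ⟨?_, ?_⟩, hkP.symm⟩
    · -- k' < kP
      have hle : Q'.side ≤ P.side := Cube.side_le_of_subset i₀ hP.2.1.le
      have hne : Q'.side ≠ P.side := by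
        intro he
        exact hP.2.1.ne (congrArg Cube.toSet (Cube.eq_of_subset_of_side_le i₀ hP.2.1.le he.ge))
      have : (2:ℝ) ^ k' < 2 ^ kP := by rw [← hk', ← hkP]; exact lt_of_le_of_ne hle hne
      exact (zpow_lt_zpow_iff_right₀ (one_lt_two (α := ℝ))).1 this
    · have hle : P.side ≤ Q.side := Cube.side_le_of_subset i₀ hP.2.2
      have : (2:ℝ) ^ kP ≤ 2 ^ (k' + (n:ℤ)) := by rw [← hkP]; exact hle.trans hn
      exact (zpow_le_zpow_iff_right₀ (one_lt_two (α := ℝ))).1 this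
  exact Set.Finite.of_finite_image
    (((Set.finite_Ioc k' (k' + n)).image _).subset himage) hinj

def gap (S : Set (Cube d)) (Q' Q : Cube d) : ℕ := (anc S Q' Q).ncard

end Lattice

section GapLemmas

variable {d : ℕ} {S D : Set (Cube d)} (i₀ : Fin d) (hD : IsDyadicLattice D) (hSD : S ⊆ D)

include i₀ hD hSD

lemma gap_pos {Q' Q : Cube d} (hQ' : Q' ∈ S) (hQ : Q ∈ S) (h : Q'.toSet ⊂ Q.toSet) :
    0 < gap S Q' Q := by
  rw [gap, Set.ncard_pos (anc_finite i₀ hD hSD (hSD hQ'))]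
  exact ⟨Q, hQ, h, subset_rfl⟩

lemma gap_add {Q' Q Q'' : Cube d} (hQ' : Q' ∈ S) (hQ : Q ∈ S) (hQ'' : Q'' ∈ S)
    (h1 : Q'.toSet ⊆ Q.toSet) (h2 : Q.toSet ⊆ Q''.toSet) :
    gap S Q' Q'' = gap S Q' Q + gap S Q Q'' := by
  have hset : anc S Q' Q'' = anc S Q' Q ∪ anc S Q Q'' := by
    ext P
    constructor
    · rintro ⟨hPS, hss, hsub⟩
      have hcomp := comparable_of_mem hD (hSD hPS) (hSD hQ)
        ⟨Q'.corner, hss.le Q'.corner_mem, h1 Q'.corner_mem⟩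
      rcases hcomp with h | h
      · exact Or.inl ⟨hPS, hss, h⟩
      · by_cases hPQ : P.toSet ⊆ Q.toSet
        · exact Or.inl ⟨hPS, hss, hPQ⟩
        · exact Or.inr ⟨hPS, ssubset_of_subset_not_subset h hPQ, hsub⟩
    · rintro (⟨hPS, hss, hsub⟩ | ⟨hPS, hss, hsub⟩)
      · exact ⟨hPS, hss, hsub.trans h2⟩
      · exact ⟨hPS, lt_of_le_of_lt h1 hss, hsub⟩
  have hdisj : Disjoint (anc S Q' Q) (anc S Q Q'') := by
    rw [Set.disjoint_left]
    rintro P ⟨_, _, hsub⟩ ⟨_, hss, _⟩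
    exact hss.not_subset hsub
  rw [gap, hset, Set.ncard_union_eq hdisj (anc_finite i₀ hD hSD (hSD hQ'))
    (anc_finite i₀ hD hSD (hSD hQ))]
  rfl

lemma exists_gap_eq {Q' Q : Cube d} (hQ' : Q' ∈ S) (hQ : Q ∈ S) (h : Q'.toSet ⊂ Q.toSet)
    {m : ℕ} (hm1 : 1 ≤ m) (hm : m ≤ gap S Q' Q) :
    ∃ P ∈ S, Q'.toSet ⊆ P.toSet ∧ P.toSet ⊂ Q.toSet ∧ gap S P Q = m := by
  obtain ⟨n, hn⟩ : ∃ n, gap S Q' Q = n := ⟨_, rfl⟩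
  induction n using Nat.strong_induction_on generalizing Q' with
  | _ n IH =>
    rcases eq_or_lt_of_le hm with he | hlt
    · exact ⟨Q', hQ', subset_rfl, h, he.symm⟩
    · rw [hn] at hlt
      -- find the minimal ancestor P₁ of Q' in Q
      have hfin : (anc S Q' Q).Finite := anc_finite i₀ hD hSD (hSD hQ')
      have hne : (anc S Q' Q).Nonempty := ⟨Q, hQ, h, subset_rfl⟩
      obtain ⟨P₁, hP₁, hmin⟩ : ∃ a ∈ anc S Q' Q, ∀ a' ∈ anc S Q' Q, a'.toSet ≤ a.toSet → a.toSet = a'.toSet := by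
        obtain ⟨P₀, hP₀1, hP₀2⟩ := Set.Finite.exists_minimalFor Cube.toSet _ hfin hne
        exact ⟨P₀, hP₀1, fun X hX hle => le_antisymm (hP₀2 hX hle) hle⟩
      have hP₁S : P₁ ∈ S := hP₁.1
      have hancP₁ : anc S P₁ Q = anc S Q' Q \ {P₁} := by
        ext X
        constructor
        · rintro ⟨hXS, hss, hsub⟩
          exact ⟨⟨hXS, hP₁.2.1.trans hss, hsub⟩, fun hX => hss.ne' (congrArg Cube.toSet
            (by rw [Set.mem_singleton_iff] at hX; rw [hX]))⟩
        · rintro ⟨⟨hXS, hss, hsub⟩, hXne⟩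
          rw [Set.mem_singleton_iff] at hXne
          have hcomp := comparable_of_mem hD (hSD hXS) (hSD hP₁S)
            ⟨Q'.corner, hss.le Q'.corner_mem, hP₁.2.1.le Q'.corner_mem⟩
          rcases hcomp with hc | hc
          · exact absurd (Cube.toSet_inj i₀ (hmin X ⟨hXS, hss, hsub⟩ hc)) (Ne.symm hXne)
          · refine ⟨hXS, ?_, hsub⟩
            exact Cube.ssubset_of_subset_of_ne i₀ hc (fun he => hXne he.symm) 
        
      have hgapP₁ : gap S P₁ Q = n - 1 := by
        rw [gap, hancP₁, Set.ncard_diff_singleton_of_mem hP₁]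
        rw [gap] at hn; rw [hn]
      have hmn : m ≤ n - 1 := by omega
      have hP₁Q : P₁.toSet ⊂ Q.toSet := by
        have hpos : (anc S P₁ Q).Nonempty := by
          rw [← Set.ncard_pos (hfin.subset (by rw [hancP₁]; exact Set.diff_subset))]
          have : 0 < gap S P₁ Q := by omega
          exact this
        obtain ⟨X, hX⟩ := hpos
        exact lt_of_lt_of_le hX.2.1 hX.2.2
      exact (IH (n-1) (by omega) hP₁S hP₁Q (by omega) hgapP₁).imp
        (fun P hP => ⟨hP.1, hP₁.2.1.le.trans hP.2.1, hP.2.2⟩)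

end GapLemmas

section Depth

variable {d : ℕ} {S D : Set (Cube d)}

/-- two cubes related if they have a common ancestor in S -/
def rel (S : Set (Cube d)) (Q Q' : Cube d) : Prop :=
  ∃ P ∈ S, Q.toSet ⊆ P.toSet ∧ Q'.toSet ⊆ P.toSet

def cls (S : Set (Cube d)) (Q : Cube d) : Set (Cube d) := {Q' | Q' ∈ S ∧ rel S Q Q'}

variable (i₀ : Fin d) (hD : IsDyadicLattice D) (hSD : S ⊆ D)

lemma rel_refl {Q : Cube d} (hQ : Q ∈ S) : rel S Q Q := ⟨Q, hQ, subset_rfl, subset_rfl⟩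

lemma rel_symm {Q Q' : Cube d} (h : rel S Q Q') : rel S Q' Q := by
  obtain ⟨P, hP, h1, h2⟩ := h; exact ⟨P, hP, h2, h1⟩

include hD hSD in
lemma rel_trans {Q Q' Q'' : Cube d} (h1 : rel S Q Q') (h2 : rel S Q' Q'') : rel S Q Q'' := by
  obtain ⟨P1, hP1, ha, hb⟩ := h1
  obtain ⟨P2, hP2, hc, hd'⟩ := h2
  rcases comparable_of_mem hD (hSD hP1) (hSD hP2)
    ⟨Q'.corner, hb Q'.corner_mem, hc Q'.corner_mem⟩ with hAB | hAB
  · exact ⟨P2, hP2, ha.trans hAB, hd'⟩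
  · exact ⟨P1, hP1, ha, hd'.trans hAB⟩

include hD hSD in
lemma cls_eq {Q Q' : Cube d} (h : rel S Q Q') : cls S Q = cls S Q' := by
  ext X
  exact ⟨fun hX => ⟨hX.1, rel_trans hD hSD (rel_symm h) hX.2⟩,
    fun hX => ⟨hX.1, rel_trans hD hSD h hX.2⟩⟩

open scoped Classical in
def rep (S : Set (Cube d)) (Q : Cube d) : Cube d :=
  if h : (cls S Q).Nonempty then h.some else Q

lemma rep_eq_of_cls_eq {Q Q' : Cube d} (hne' : (cls S Q').Nonempty)
    (h : cls S Q = cls S Q') : rep S Q = rep S Q' := by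
  unfold rep
  rw [h, dif_pos hne', dif_pos hne']

lemma rep_spec {Q : Cube d} (hQ : Q ∈ S) : rep S Q ∈ S ∧ rel S Q (rep S Q) := by
  have hne : (cls S Q).Nonempty := ⟨Q, hQ, rel_refl hQ⟩
  have : rep S Q = hne.some := by rw [rep, dif_pos hne]
  rw [this]
  exact hne.some_mem

open scoped Classical in
/-- relative depth of `Q` with respect to the representative of its class -/
def gdepth (S : Set (Cube d)) (Q : Cube d) : ℤ :=
  if h : ∃ P, P ∈ S ∧ Q.toSet ⊆ P.toSet ∧ (rep S Q).toSet ⊆ P.toSet then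
    (gap S Q h.choose : ℤ) - (gap S (rep S Q) h.choose : ℤ)
  else 0

include i₀ hD hSD in
lemma gdepth_spec {Q P : Cube d} (hQ : Q ∈ S) (hP : P ∈ S) (h1 : Q.toSet ⊆ P.toSet)
    (h2 : (rep S Q).toSet ⊆ P.toSet) :
    gdepth S Q = (gap S Q P : ℤ) - (gap S (rep S Q) P : ℤ) := by
  have hex : ∃ P', P' ∈ S ∧ Q.toSet ⊆ P'.toSet ∧ (rep S Q).toSet ⊆ P'.toSet := ⟨P, hP, h1, h2⟩
  rw [gdepth, dif_pos hex]
  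
  obtain ⟨hP0S, h1', h2'⟩ := hex.choose_spec
  set P₀ := hex.choose
  have hRS : rep S Q ∈ S := (rep_spec hQ).1
  rcases comparable_of_mem hD (hSD hP) (hSD hP0S)
    ⟨Q.corner, h1 Q.corner_mem, h1' Q.corner_mem⟩ with hc | hc
  · rw [gap_add i₀ hD hSD hQ hP hP0S h1 hc, gap_add i₀ hD hSD hRS hP hP0S h2 hc]
    push_cast; ring
  · rw [gap_add i₀ hD hSD hQ hP0S hP h1' hc, gap_add i₀ hD hSD hRS hP0S hP h2' hc]
    push_cast; ring

include i₀ hD hSD in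
lemma gdepth_ssubset {Q' Q : Cube d} (hQ' : Q' ∈ S) (hQ : Q ∈ S) (hss : Q'.toSet ⊂ Q.toSet) :
    gdepth S Q' = gdepth S Q + (gap S Q' Q : ℤ) := by
  have hrel : rel S Q' Q := ⟨Q, hQ, hss.le, subset_rfl⟩
  have hrep : rep S Q' = rep S Q := rep_eq_of_cls_eq ⟨Q, hQ, rel_refl hQ⟩ (cls_eq hD hSD hrel)
  obtain ⟨hRS, P₁, hP₁, hQP₁, hRP₁⟩ := rep_spec (S := S) hQ
  have e1 : gdepth S Q = (gap S Q P₁ : ℤ) - (gap S (rep S Q) P₁ : ℤ) :=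
    gdepth_spec i₀ hD hSD hQ hP₁ hQP₁ hRP₁
  have e2 : gdepth S Q' = (gap S Q' P₁ : ℤ) - (gap S (rep S Q') P₁ : ℤ) :=
    gdepth_spec i₀ hD hSD hQ' hP₁ (hss.le.trans hQP₁) (by rw [hrep]; exact hRP₁)
  rw [hrep] at e2
  have e3 : gap S Q' P₁ = gap S Q' Q + gap S Q P₁ :=
    gap_add i₀ hD hSD hQ' hQ hP₁ hss.le hQP₁
  rw [e1, e2, e3]
  push_cast; ring

end Depth

section Key

variable {d : ℕ} {S D : Set (Cube d)}

lemma exists_good_level (i₀ : Fin d) (hD : IsDyadicLattice D) (hSD : S ⊆ D)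
    {E : Cube d → Set (Fin d → ℝ)}
    (hEmeas : ∀ Q ∈ S, MeasurableSet (E Q)) (hEsub : ∀ Q ∈ S, E Q ⊆ Q.toSet)
    (hEvol : ∀ Q ∈ S, volume Q.toSet < 2 * volume (E Q)) (hEdisj : S.PairwiseDisjoint E)
    {Q : Cube d} (hQ : Q ∈ S) :
    ∃ m : ℕ, 1 ≤ m ∧ m ≤ 4 ∧
      volume (⋃ Q' ∈ {Q' | Q' ∈ S ∧ Q'.toSet ⊂ Q.toSet ∧ gap S Q' Q = m}, Cube.toSet Q')
        ≤ volume Q.toSet / 4 := by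
  classical
  set L : ℕ → Set (Cube d) :=
    fun m => {Q' | Q' ∈ S ∧ Q'.toSet ⊂ Q.toSet ∧ gap S Q' Q = m} with hL
  have hLS : ∀ m, L m ⊆ S := fun m Q' h => h.1
  -- cubes in L m are pairwise disjoint
  have hdisjL : ∀ m, (L m).PairwiseDisjoint Cube.toSet := by
    intro m Q₁ h₁ Q₂ h₂ hne
    have hcomp := hD.2.1 Q₁ (hSD h₁.1) Q₂ (hSD h₂.1)
    rcases hcomp with hc | hc | hc
    · exfalso
      have hss : Q₁.toSet ⊂ Q₂.toSet := Cube.ssubset_of_subset_of_ne i₀ hc hne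
      have := gap_add i₀ hD hSD h₁.1 h₂.1 hQ hss.le h₂.2.1.le
      have hpos := gap_pos i₀ hD hSD h₁.1 h₂.1 hss
      rw [h₁.2.2, h₂.2.2] at this
      omega
    · exfalso
      have hss : Q₂.toSet ⊂ Q₁.toSet := Cube.ssubset_of_subset_of_ne i₀ hc (Ne.symm hne)
      have := gap_add i₀ hD hSD h₂.1 h₁.1 hQ hss.le h₁.2.1.le
      have hpos := gap_pos i₀ hD hSD h₂.1 h₁.1 hss
      rw [h₁.2.2, h₂.2.2] at this
      omega
    · exact hc
  -- L m is countable
  have hcnt : ∀ m, (L m).Countable := by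
    intro m
    have := MeasureTheory.Measure.countable_meas_pos_of_disjoint_iUnion
      (μ := (volume : Measure (Fin d → ℝ)))
      (As := fun q : ↥(L m) => (q : Cube d).toSet)
      (fun q => Cube.measurableSet_toSet _)
      (fun q₁ q₂ hne => hdisjL m q₁.2 q₂.2 (fun he => hne (Subtype.ext he)))
    have huniv : {q : ↥(L m) | 0 < volume (q : Cube d).toSet} = Set.univ := by
      ext q; simp [Cube.volume_toSet_pos]
    rw [huniv, Set.countable_univ_iff] at this
    exact Set.countable_coe_iff.mp this
  -- the key measure estimate for each level
  have key : ∀ m, volume (⋃ Q' ∈ L m, Cube.toSet Q') ≤ 2 * volume (⋃ Q' ∈ L m, E Q') := by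
    intro m
    rw [measure_biUnion (hcnt m) (hdisjL m) (fun Q' _ => Cube.measurableSet_toSet Q'),
      measure_biUnion (hcnt m)
        (fun Q₁ h₁ Q₂ h₂ hne => hEdisj (hLS m h₁) (hLS m h₂) hne)
        (fun Q' h => hEmeas Q' (hLS m h)),
      ← ENNReal.tsum_mul_left]
    exact ENNReal.tsum_le_tsum fun q => (hEvol _ (hLS m q.2)).le
  set a := volume Q.toSet with ha
  set e := volume (E Q) with he
  have haT : a ≠ ⊤ := Cube.volume_toSet_ne_top Q
  have hea : e ≤ a := measure_mono (hEsub Q hQ)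
  have heT : e ≠ ⊤ := fun h => haT (top_le_iff.mp (h ▸ hea))
  set V : ℕ → ℝ≥0∞ := fun m => volume (⋃ Q' ∈ L m, Cube.toSet Q') with hV
  have hVa : ∀ m, V m ≤ a := by
    intro m
    refine measure_mono (Set.iUnion₂_subset fun Q' h => h.2.1.le)
  have hVT : ∀ m, V m ≠ ⊤ := fun m h => haT (top_le_iff.mp (h ▸ hVa m))
  -- the E-unions at different levels are disjoint and avoid E Q
  set B : ℕ → Set (Fin d → ℝ) := fun m => ⋃ Q' ∈ L m, E Q' with hB
  have hBmeas : ∀ m, MeasurableSet (B m) :=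
    fun m => MeasurableSet.biUnion (hcnt m) (fun Q' h => hEmeas Q' (hLS m h))
  have hBdisj : ∀ m n, m ≠ n → Disjoint (B m) (B n) := by
    intro m n hmn
    simp only [hB, Set.disjoint_iUnion_left, Set.disjoint_iUnion_right]
    intro Q₂ h₂ Q₁ h₁
    have hne : Q₁ ≠ Q₂ := by
      intro he
      rw [he] at h₁
      exact hmn (h₁.2.2 ▸ h₂.2.2 ▸ rfl)
    exact hEdisj (hLS m h₁) (hLS n h₂) hne
  have hBsub : ∀ m, B m ⊆ Q.toSet \ E Q := by
    intro m
    refine Set.iUnion₂_subset fun Q' h => ?_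
    intro x hx
    refine ⟨h.2.1.le (hEsub Q' h.1 hx), fun hxQ => ?_⟩
    have hne : Q' ≠ Q := fun he => h.2.1.ne (congrArg Cube.toSet he)
    exact Set.disjoint_left.mp (hEdisj h.1 hQ hne) hx hxQ
  have hsum : V 1 + V 2 + V 3 + V 4 ≤ 2 * (a - e) := by
    have u12 : volume (B 1 ∪ B 2) = volume (B 1) + volume (B 2) :=
      measure_union (hBdisj 1 2 (by norm_num)) (hBmeas 2)
    have u123 : volume (B 1 ∪ B 2 ∪ B 3) = volume (B 1) + volume (B 2) + volume (B 3) := by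
      rw [measure_union (Disjoint.union_left (hBdisj 1 3 (by norm_num))
        (hBdisj 2 3 (by norm_num))) (hBmeas 3), u12]
    have u1234 : volume (B 1 ∪ B 2 ∪ B 3 ∪ B 4)
        = volume (B 1) + volume (B 2) + volume (B 3) + volume (B 4) := by
      rw [measure_union (Disjoint.union_left (Disjoint.union_left
        (hBdisj 1 4 (by norm_num)) (hBdisj 2 4 (by norm_num)))
        (hBdisj 3 4 (by norm_num))) (hBmeas 4), u123]
    have hle : volume (B 1 ∪ B 2 ∪ B 3 ∪ B 4) ≤ volume (Q.toSet \ E Q) := by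
      refine measure_mono ?_
      refine Set.union_subset (Set.union_subset (Set.union_subset ?_ ?_) ?_) ?_ <;>
        exact hBsub _
    have hdiff : volume (Q.toSet \ E Q) = a - e :=
      measure_diff (hEsub Q hQ) (hEmeas Q hQ).nullMeasurableSet heT
    calc V 1 + V 2 + V 3 + V 4
        ≤ 2 * volume (B 1) + 2 * volume (B 2) + 2 * volume (B 3) + 2 * volume (B 4) := by
          gcongr <;> exact key _
      _ = 2 * (volume (B 1 ∪ B 2 ∪ B 3 ∪ B 4)) := by rw [u1234]; ring
      _ ≤ 2 * (a - e) := by rw [← hdiff]; gcongr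
  -- pass to real numbers and use the pigeonhole principle
  have hae : (a - e).toReal = a.toReal - e.toReal := ENNReal.toReal_sub_of_le hea haT
  have hlt2 : a.toReal < 2 * e.toReal := by
    have := hEvol Q hQ
    rw [← ha, ← he] at this
    have h2e : (2 : ℝ≥0∞) * e ≠ ⊤ := by
      refine ENNReal.mul_ne_top (by norm_num) heT
    have := (ENNReal.toReal_lt_toReal haT h2e).mpr this
    rwa [ENNReal.toReal_mul, ENNReal.toReal_ofNat] at this
  have hsumR : (V 1).toReal + (V 2).toReal + (V 3).toReal + (V 4).toReal
      ≤ 2 * (a.toReal - e.toReal) := by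
    rw [← hae, ← ENNReal.toReal_ofNat, ← ENNReal.toReal_mul]
    rw [← ENNReal.toReal_add (hVT 1) (hVT 2), ← ENNReal.toReal_add ?h1 (hVT 3),
      ← ENNReal.toReal_add ?h2 (hVT 4)]
    case h1 => exact ENNReal.add_ne_top.mpr ⟨hVT 1, hVT 2⟩
    case h2 => exact ENNReal.add_ne_top.mpr ⟨ENNReal.add_ne_top.mpr ⟨hVT 1, hVT 2⟩, hVT 3⟩
    refine ENNReal.toReal_mono ?_ hsum
    exact ENNReal.mul_ne_top (by norm_num) (fun h => haT ((ENNReal.sub_eq_top_iff.mp h).1))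
  have hmain : ∃ m : ℕ, 1 ≤ m ∧ m ≤ 4 ∧ (V m).toReal ≤ a.toReal / 4 := by
    by_contra hcon
    push_neg at hcon
    have c1 := hcon 1 (le_refl 1) (by norm_num)
    have c2 := hcon 2 (by norm_num) (by norm_num)
    have c3 := hcon 3 (by norm_num) (by norm_num)
    have c4 := hcon 4 (by norm_num) (by norm_num)
    linarith
  obtain ⟨m, hm1, hm4, hVm⟩ := hmain
  refine ⟨m, hm1, hm4, ?_⟩
  have h4T : a / 4 ≠ ⊤ := (ENNReal.div_lt_top haT (by norm_num)).ne
  rw [← ENNReal.toReal_le_toReal (hVT m) h4T, ENNReal.toReal_div]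
  simpa using hVm

end Key


/-- A collection `S` of cubes is sparse if for every `Q ∈ S` there is a measurable
`E_Q ⊆ Q` with `|E_Q| > ½ |Q|`, the sets `{E_Q : Q ∈ S}` being pairwise disjoint. -/
def IsSparse {d : ℕ} (S : Set (Cube d)) : Prop :=
  ∃ E : Cube d → Set (Fin d → ℝ),
    (∀ Q ∈ S, MeasurableSet (E Q)) ∧
    (∀ Q ∈ S, E Q ⊆ Q.toSet) ∧
    (∀ Q ∈ S, volume Q.toSet < 2 * volume (E Q)) ∧
    S.PairwiseDisjoint E

/-- `⟨f⟩_Q = (1/|Q|) ∫_Q |f|`, valued in `ℝ≥0∞`. -/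
def avg {d : ℕ} (f : (Fin d → ℝ) → ℝ) (Q : Cube d) : ℝ≥0∞ :=
  (∫⁻ y in Q.toSet, ENNReal.ofReal |f y|) / volume Q.toSet

/-- `w(A) = ∫_A w` for a weight `w`. -/
def wInt {d : ℕ} (w : (Fin d → ℝ) → ℝ) (A : Set (Fin d → ℝ)) : ℝ≥0∞ :=
  ∫⁻ y in A, ENNReal.ofReal (w y)

/-- The Hardy–Littlewood maximal function (over all cubes). -/
def hlMax {d : ℕ} (f : (Fin d → ℝ) → ℝ) (x : Fin d → ℝ) : ℝ≥0∞ :=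
  ⨆ (Q : Cube d) (_ : x ∈ Q.toSet), avg f Q

/-- `log t = log₂ (2 + t)`, extended to `ℝ≥0∞` by `log ∞ = ∞`. -/
def elog (t : ℝ≥0∞) : ℝ≥0∞ :=
  if t = ∞ then ∞ else ENNReal.ofReal (Real.logb 2 (2 + t.toReal))

/-- `ρ_w(Q) = (1/w(Q)) ∫_Q M(1_Q w)`. -/
def rho {d : ℕ} (w : (Fin d → ℝ) → ℝ) (Q : Cube d) : ℝ≥0∞ :=
  (∫⁻ x in Q.toSet, hlMax (Q.toSet.indicator w) x) / wInt w Q.toSet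

/-- A bounded, compactly supported (measurable) function. -/
def BCS {d : ℕ} (f : (Fin d → ℝ) → ℝ) : Prop :=
  Measurable f ∧ (∃ C : ℝ, ∀ x, |f x| ≤ C) ∧ HasCompactSupport f

/-- `T` admits a sparse bilinear domination: for all bounded compactly supported
`f₁, f₂` there are `3^d` sparse collections, each contained in a dyadic lattice, with
`|⟨T f₁, f₂⟩| ≲ ∑_k ∑_{Q ∈ S_k} |Q| ⟨f₁⟩_Q ⟨f₂⟩_Q`. -/
def HasSparseDomination {d : ℕ} (T : ((Fin d → ℝ) → ℝ) → (Fin d → ℝ) → ℝ) : Prop :=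
  ∃ Cd : ℝ, 0 < Cd ∧ ∀ f₁ f₂ : (Fin d → ℝ) → ℝ, BCS f₁ → BCS f₂ →
    ∃ S : Fin (3 ^ d) → Set (Cube d),
      (∀ k, ∃ D, IsDyadicLattice D ∧ S k ⊆ D) ∧
      (∀ k, IsSparse (S k)) ∧
      ENNReal.ofReal |∫ x, T f₁ x * f₂ x| ≤
        ENNReal.ofReal Cd * ∑ k : Fin (3 ^ d), ∑' Q : S k,
          volume (Q : Cube d).toSet * avg f₁ (Q : Cube d) * avg f₂ (Q : Cube d)

/-- The stronger sparsity condition: for every `Q ∈ S`, the union of the cubes of `S`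
strictly contained in `Q` has measure at most `¼|Q|`. -/
def IsStronglySparse {d : ℕ} (S : Set (Cube d)) : Prop :=
  ∀ Q ∈ S,
    volume (⋃ (Q' : Cube d) (_ : Q' ∈ S) (_ : Q'.toSet ⊂ Q.toSet), Q'.toSet) ≤
      volume Q.toSet / 4

/-- **Lemma.** Every sparse collection of cubes contained in a dyadic lattice is the
union of eight subcollections, each satisfying the stronger sparsity condition. -/
theorem sparse_eq_union_of_eight_strongly_sparse {d : ℕ} (S : Set (Cube d))
    (D : Set (Cube d)) (hD : IsDyadicLattice D) (hSD : S ⊆ D) (hS : IsSparse S) :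
    ∃ T : Fin 8 → Set (Cube d),
      S = ⋃ i : Fin 8, T i ∧ ∀ i : Fin 8, IsStronglySparse (T i) := by
  classical
  rcases Nat.eq_zero_or_pos d with hd0 | hdpos
  · -- degenerate case `d = 0`: there are no strict inclusions at all
    subst hd0
    refine ⟨fun i => if i = 0 then S else ∅, ?_, ?_⟩
    · ext Q
      simp only [Set.mem_iUnion]
      constructor
      · intro hQ; exact ⟨0, by simpa using hQ⟩
      · rintro ⟨i, hi⟩
        by_cases h : i = 0 <;> simp [h] at hi <;> simp [hi]
    · intro i Q hQ
      have huniv : ∀ R : Cube 0, R.toSet = Set.univ := by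
        intro R
        ext x
        simp only [Set.mem_univ, iff_true]
        exact fun j => j.elim0
      have : (⋃ (Q' : Cube 0) (_ : Q' ∈ (if i = 0 then S else ∅)) (_ : Q'.toSet ⊂ Q.toSet),
          Q'.toSet) = ∅ := by
        refine Set.eq_empty_iff_forall_notMem.mpr fun x hx => ?_
        simp only [Set.mem_iUnion] at hx
        obtain ⟨Q', -, hss, -⟩ := hx
        rw [huniv Q', huniv Q] at hss
        exact hss.ne rfl
      rw [this]
      simp
  · -- main case `d ≥ 1`
    have i₀ : Fin d := ⟨0, hdpos⟩
    have hD' : IsDyadicLattice D := hD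
    obtain ⟨E, hEmeas, hEsub, hEvol, hEdisj⟩ := hS
    refine ⟨fun i => if (i : ℕ) < 4 then {Q | Q ∈ S ∧ (gdepth S Q) % 4 = (i : ℕ)} else ∅,
      ?_, ?_⟩
    · ext Q
      simp only [Set.mem_iUnion]
      constructor
      · intro hQ
        have hr0 : 0 ≤ (gdepth S Q) % 4 := Int.emod_nonneg _ (by norm_num)
        have hr4 : (gdepth S Q) % 4 < 4 := Int.emod_lt_of_pos _ (by norm_num)
        refine ⟨⟨((gdepth S Q) % 4).toNat, by omega⟩, ?_⟩
        have h4 : (((gdepth S Q) % 4).toNat : ℕ) < 4 := by omega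
        simp only [h4, if_true]
        exact ⟨hQ, by rw [Int.toNat_of_nonneg hr0]⟩
      · rintro ⟨i, hi⟩
        by_cases h : (i : ℕ) < 4 <;> simp [h] at hi
        exact hi.1
    · intro i Q hQ
      by_cases h : (i : ℕ) < 4
      swap
      · simp [h] at hQ
      simp only [h, if_true, Set.mem_setOf_eq] at hQ
      obtain ⟨hQS, hQmod⟩ := hQ
      obtain ⟨m, hm1, hm4, hVm⟩ :=
        exists_good_level i₀ hD hSD hEmeas hEsub hEvol hEdisj hQS
      refine le_trans (measure_mono ?_) hVm
      intro x hx
      simp only [Set.mem_iUnion] at hx ⊢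
      obtain ⟨Q', hQ'T, hss, hxQ'⟩ := hx
      simp only [h, if_true, Set.mem_setOf_eq] at hQ'T
      obtain ⟨hQ'S, hQ'mod⟩ := hQ'T
      have hdep := gdepth_ssubset i₀ hD hSD hQ'S hQS hss
      have hgap1 : 0 < gap S Q' Q := gap_pos i₀ hD hSD hQ'S hQS hss
      have hdvd : (4 : ℤ) ∣ (gap S Q' Q : ℤ) := by omega
      have hmle : m ≤ gap S Q' Q := by omega
      obtain ⟨P, hPS, hQ'P, hPQ, hgapP⟩ :=
        exists_gap_eq i₀ hD hSD hQ'S hQS hss hm1 hmle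
      exact ⟨P, ⟨hPS, hPQ, hgapP⟩, hQ'P hxQ'⟩
end
end

section
/- Let w be a weight on ℝ^d, G ⊂ ℝ^d with 0 < w(G) < ∞, and let S be a sparse collection of dyadic cubes such that every Q ∈ S satisfies ⟨f⟩_Q ≤ 3^d · 4 · w(G)^{-1}, where f is a bounded compactly supported function. For k ≥ −1 let S_k := {Q ∈ S : ⟨f⟩_Q ≃ 4^{-k} w(G)^{-1}} (i.e., 4^{-k-1} w(G)^{-1} < ⟨f⟩_Q ≤ 4^{-k} w(G)^{-1}). Then for each fixed k, Σ_{Q∈S_k} ⟨f⟩_Q w(Q) ≲ ∫_{ℝ^d} |f(y)| Mw(y) dy, where M is the Hardy–Littlewood maximal function, with implicit constant independent of k, f, w, G. -/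
open MeasureTheory ENNReal Set

set_option maxHeartbeats 1000000

noncomputable section

namespace SparseAux
variable {d : ℕ}

lemma cube_toSet_eq (Q : Cube d) :
    Q.toSet = Set.pi Set.univ (fun i => Set.Ico (Q.corner i) (Q.corner i + Q.side)) := by
  ext x; simp [Cube.toSet, Set.mem_pi, Set.mem_Ico]

lemma cube_meas (Q : Cube d) : MeasurableSet Q.toSet := by
  rw [cube_toSet_eq]; exact MeasurableSet.univ_pi (fun i => measurableSet_Ico)

lemma cube_vol (Q : Cube d) : volume Q.toSet = ENNReal.ofReal Q.side ^ d := by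
  rw [cube_toSet_eq, volume_pi_pi]
  simp [Real.volume_Ico]

lemma cube_vol_pos (Q : Cube d) : 0 < volume Q.toSet := by
  rw [cube_vol]
  exact ENNReal.pow_pos (by simpa using Q.side_pos) d

lemma cube_vol_lt_top (Q : Cube d) : volume Q.toSet < ∞ := by
  rw [cube_vol]; exact ENNReal.pow_lt_top ENNReal.ofReal_lt_top

lemma corner_mem (Q : Cube d) : Q.corner ∈ Q.toSet :=
  fun i => ⟨le_refl _, lt_add_of_pos_right _ Q.side_pos⟩

lemma cube_nonempty (Q : Cube d) : Q.toSet.Nonempty := ⟨Q.corner, corner_mem Q⟩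

lemma side_le_of_subset (hd : 0 < d) {Q R : Cube d} (h : Q.toSet ⊆ R.toSet) :
    Q.side ≤ R.side := by
  by_contra hs
  push_neg at hs
  have hv : volume Q.toSet ≤ volume R.toSet := measure_mono h
  rw [cube_vol, cube_vol] at hv
  have : ENNReal.ofReal R.side ^ d < ENNReal.ofReal Q.side ^ d := by
    refine ENNReal.pow_lt_pow_left hd.ne' ?_
    exact (ENNReal.ofReal_lt_ofReal_iff (lt_trans R.side_pos hs)).2 hs
  exact absurd hv (not_le.2 this)

lemma eq_of_subset_of_side_eq (hd : 0 < d) {Q R : Cube d} (h : Q.toSet ⊆ R.toSet)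
    (hs : Q.side = R.side) : Q = R := by
  have hcorner : ∀ i, Q.corner i = R.corner i := by
    intro i
    have h1 : R.corner i ≤ Q.corner i := (h (corner_mem Q) i).1
    refine le_antisymm ?_ h1
    have key : ∀ ε : ℝ, 0 < ε → ε < Q.side → Q.corner i < R.corner i + ε := by
      intro ε hε hεs
      have hx : (fun j => Q.corner j + (Q.side - ε)) ∈ Q.toSet := by
        intro j
        simp only []
        constructor
        · linarith
        · linarith
      have := (h hx i).2
      rw [← hs] at this
      linarith
    by_contra hlt
    push_neg at hlt
    have hδ : 0 < (Q.corner i - R.corner i) / 2 := by linarith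
    rcases lt_or_ge ((Q.corner i - R.corner i) / 2) Q.side with hc | hc
    · have := key _ hδ hc; linarith
    · have := key (Q.side / 2) (by linarith [Q.side_pos]) (by linarith [Q.side_pos])
      linarith
  rcases Q with ⟨c, s, hs'⟩; rcases R with ⟨c', s', hs''⟩
  simp only at hcorner hs
  subst hs
  congr 1
  exact funext hcorner

lemma toSet_inj (hd : 0 < d) {Q R : Cube d} (h : Q.toSet = R.toSet) : Q = R := by
  have h1 := side_le_of_subset hd h.le
  have h2 := side_le_of_subset hd h.ge
  exact eq_of_subset_of_side_eq hd h.le (le_antisymm h1 h2)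

lemma eq_of_subset_of_vol_eq (hd : 0 < d) {Q R : Cube d} (h : Q.toSet ⊆ R.toSet)
    (hv : volume Q.toSet = volume R.toSet) : Q = R := by
  refine eq_of_subset_of_side_eq hd h ?_
  have := side_le_of_subset hd h
  by_contra hne
  have hlt : Q.side < R.side := lt_of_le_of_ne this hne
  have : volume Q.toSet < volume R.toSet := by
    rw [cube_vol, cube_vol]
    exact ENNReal.pow_lt_pow_left hd.ne' ((ENNReal.ofReal_lt_ofReal_iff (lt_trans Q.side_pos hlt)).2 hlt)
  exact absurd hv this.ne


/-- Among cubes of `S` with bounded volume, those containing a fixed cube form a finite set. -/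
lemma finite_ancestors (hd : 0 < d) {S : Set (Cube d)}
    (hcmp : ∀ Q ∈ S, ∀ R ∈ S,
      Q.toSet ⊆ R.toSet ∨ R.toSet ⊆ Q.toSet ∨ Disjoint Q.toSet R.toSet)
    (hdyadic : ∀ Q ∈ S, ∃ j : ℤ, Q.side = 2 ^ j)
    {P : Cube d → Prop} (hPS : ∀ Q, P Q → Q ∈ S)
    {B : ℝ≥0∞} (hB : B ≠ ∞) (hvol : ∀ Q, P Q → volume Q.toSet ≤ B)
    (Q0 : Cube d) :
    {R : Cube d | P R ∧ Q0.toSet ⊆ R.toSet}.Finite := by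
  classical
  set A := {R : Cube d | P R ∧ Q0.toSet ⊆ R.toSet} with hA
  -- the dyadic exponent of a cube in `S`
  have hj : ∀ R ∈ A, ∃ j : ℤ, R.side = 2 ^ j := fun R hR => hdyadic R (hPS R hR.1)
  set j0 := Int.log 2 Q0.side with hj0
  -- choose N with `max 1 (B.toReal + 1) ≤ 2 ^ (j0 + N)`
  obtain ⟨N, hN⟩ : ∃ N : ℕ, max 1 (B.toReal + 1) ≤ (2:ℝ) ^ (j0 + (N:ℤ)) := by
    obtain ⟨n, hn⟩ := pow_unbounded_of_one_lt (max 1 (B.toReal + 1) / (2:ℝ) ^ j0)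
      (one_lt_two (α := ℝ))
    refine ⟨n, ?_⟩
    have h2 : (0:ℝ) < (2:ℝ) ^ j0 := zpow_pos (by norm_num) _
    rw [zpow_add₀ (by norm_num : (2:ℝ) ≠ 0), zpow_natCast]
    calc max 1 (B.toReal + 1) = max 1 (B.toReal + 1) / (2:ℝ) ^ j0 * (2:ℝ) ^ j0 := by
          field_simp
      _ ≤ (2:ℝ) ^ n * (2:ℝ) ^ j0 := by
          apply mul_le_mul_of_nonneg_right hn.le h2.le
      _ = (2:ℝ) ^ j0 * 2 ^ n := by ring
  -- bounds on the exponent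
  have key : ∀ R ∈ A, ∀ j : ℤ, R.side = 2 ^ j → j0 ≤ j ∧ j < j0 + N := by
    intro R hR j hjR
    have hside : Q0.side ≤ R.side := side_le_of_subset hd hR.2
    constructor
    · -- lower bound
      have h1 : (2:ℝ) ^ j0 ≤ Q0.side := Int.zpow_log_le_self (by norm_num) Q0.side_pos
      have : (2:ℝ) ^ j0 ≤ (2:ℝ) ^ j := le_trans h1 (hjR ▸ hside)
      exact (zpow_le_zpow_iff_right₀ (one_lt_two (α := ℝ))).1 this
    · -- upper bound
      by_contra hcon
      push_neg at hcon
      have h2 : (2:ℝ) ^ (j0 + (N:ℤ)) ≤ (2:ℝ) ^ j :=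
        zpow_le_zpow_right₀ (one_le_two (α := ℝ)) hcon
      have h3 : B < volume R.toSet := by
        rw [cube_vol, hjR]
        have h4 : B < ENNReal.ofReal ((2:ℝ) ^ j) := by
          refine (ENNReal.lt_ofReal_iff_toReal_lt hB).2 ?_
          have : B.toReal + 1 ≤ (2:ℝ) ^ j := le_trans (le_trans (le_max_right _ _) hN) h2
          linarith
        calc B < ENNReal.ofReal ((2:ℝ) ^ j) := h4
          _ ≤ ENNReal.ofReal ((2:ℝ) ^ j) ^ d := by
            refine le_self_pow₀ ?_ hd.ne'
            refine ENNReal.one_le_ofReal.2 ?_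
            exact le_trans (le_trans (le_max_left _ _) hN) h2
      exact absurd (hvol R hR.1) (not_le.2 h3)
  -- the exponent map is injective on `A`
  choose jfun hjfun using hj
  have hinj : Set.InjOn (fun r : A => jfun r r.2) Set.univ := by
    intro ⟨R, hR⟩ _ ⟨R', hR'⟩ _ hEq
    simp only at hEq
    have hside : R.side = R'.side := by
      rw [hjfun R hR, hjfun R' hR', hEq]
    have hnd : ¬ Disjoint R.toSet R'.toSet := by
      intro hdis
      exact (hdis.ne_of_mem (hR.2 (corner_mem Q0)) (hR'.2 (corner_mem Q0))) rfl
    rcases hcmp R (hPS R hR.1) R' (hPS R' hR'.1) with h | h | h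
    · exact Subtype.ext (eq_of_subset_of_side_eq hd h hside)
    · exact Subtype.ext (eq_of_subset_of_side_eq hd h hside.symm).symm
    · exact absurd h hnd
  -- conclude
  have hAfin : Set.Finite (Set.univ : Set A) := by
    have himg : (fun r : A => jfun r r.2) '' Set.univ ⊆ ↑(Finset.Ico j0 (j0 + N)) := by
      rintro j ⟨⟨R, hR⟩, _, rfl⟩
      simp only [Finset.coe_Ico, Set.mem_Ico]
      exact key R hR _ (hjfun R hR)
    exact Set.Finite.of_finite_image (Set.Finite.subset (Finset.finite_toSet _) himg) hinj
  have : Finite A := Set.finite_univ_iff.1 hAfin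
  exact Set.toFinite A



lemma avg_eq_withDensity (f : (Fin d → ℝ) → ℝ) (Q : Cube d) :
    avg f Q = (volume.withDensity fun y => ENNReal.ofReal |f y|) Q.toSet / volume Q.toSet := by
  rw [avg, withDensity_apply _ (cube_meas Q)]

lemma key (hd : 0 < d) {S : Set (Cube d)}
    (hcmp : ∀ Q ∈ S, ∀ R ∈ S,
      Q.toSet ⊆ R.toSet ∨ R.toSet ⊆ Q.toSet ∨ Disjoint Q.toSet R.toSet)
    (hdyadic : ∀ Q ∈ S, ∃ j : ℤ, Q.side = 2 ^ j)
    (hScount : S.Countable)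
    {E : Cube d → Set (Fin d → ℝ)}
    (hEm : ∀ Q ∈ S, MeasurableSet (E Q)) (hEsub : ∀ Q ∈ S, E Q ⊆ Q.toSet)
    (hEvol : ∀ Q ∈ S, volume Q.toSet < 2 * volume (E Q))
    (hEdisj : S.PairwiseDisjoint E)
    {w f : (Fin d → ℝ) → ℝ} (hw0 : ∀ x, 0 ≤ w x) (hf : Measurable f)
    (hftot : (∫⁻ y, ENNReal.ofReal |f y|) ≠ ∞)
    {a : ℝ≥0∞} (ha0 : a ≠ 0) (haT : a ≠ ∞)
    {P : Cube d → Prop}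
    (hP : ∀ Q, P Q → Q ∈ S ∧ a < avg f Q ∧ avg f Q ≤ 4 * a) :
    (∑' Q : {Q : Cube d // P Q}, avg f (Q : Cube d) * wInt w (Q : Cube d).toSet) ≤
      32 * ∫⁻ y, ENNReal.ofReal |f y| * hlMax w y := by
  classical
  have hPS : ∀ Q, P Q → Q ∈ S := fun Q h => (hP Q h).1
  set ν : Measure (Fin d → ℝ) := volume.withDensity (fun y => ENNReal.ofReal |f y|) with hνdef
  have hν : ∀ A : Set (Fin d → ℝ), MeasurableSet A →
      ν A = ∫⁻ y in A, ENNReal.ofReal |f y| := fun A hA => withDensity_apply _ hA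
  have hνuniv : ν Set.univ ≠ ∞ := by
    rw [hν _ MeasurableSet.univ, setLIntegral_univ]; exact hftot
  have hνne : ∀ A : Set (Fin d → ℝ), ν A ≠ ∞ :=
    fun A => (lt_of_le_of_lt (measure_mono (Set.subset_univ A)) hνuniv.lt_top).ne
  have havg : ∀ Q : Cube d, avg f Q = ν Q.toSet / volume Q.toSet :=
    fun Q => avg_eq_withDensity f Q
  -- lower and upper bounds on the f-mass of cubes in the family
  have hq_low : ∀ Q, P Q → a * volume Q.toSet ≤ ν Q.toSet := by
    intro Q hQ
    have h1 : a ≤ ν Q.toSet / volume Q.toSet := by rw [← havg]; exact (hP Q hQ).2.1.le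
    calc a * volume Q.toSet ≤ ν Q.toSet / volume Q.toSet * volume Q.toSet :=
          mul_le_mul_left h1 _
      _ = ν Q.toSet := ENNReal.div_mul_cancel (cube_vol_pos Q).ne' (cube_vol_lt_top Q).ne
  have hq_high : ∀ Q, P Q → ν Q.toSet ≤ 4 * a * volume Q.toSet := by
    intro Q hQ
    have h1 : ν Q.toSet / volume Q.toSet ≤ 4 * a := by rw [← havg]; exact (hP Q hQ).2.2
    calc ν Q.toSet = ν Q.toSet / volume Q.toSet * volume Q.toSet :=
          (ENNReal.div_mul_cancel (cube_vol_pos Q).ne' (cube_vol_lt_top Q).ne).symm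
      _ ≤ 4 * a * volume Q.toSet := mul_le_mul_left h1 _
  -- the volume of cubes in the family is bounded
  set B : ℝ≥0∞ := ν Set.univ / a with hBdef
  have hBne : B ≠ ∞ := (ENNReal.div_lt_top hνuniv ha0).ne
  have hvolB : ∀ Q, P Q → volume Q.toSet ≤ B := by
    intro Q hQ
    rw [hBdef, ENNReal.le_div_iff_mul_le (Or.inl ha0) (Or.inl haT)]
    calc volume Q.toSet * a = a * volume Q.toSet := mul_comm _ _
      _ ≤ ν Q.toSet := hq_low Q hQ
      _ ≤ ν Set.univ := measure_mono (Set.subset_univ _)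
  -- ancestor sets are finite
  have hAncW_fin : ∀ Q0 : Cube d, {R : Cube d | P R ∧ Q0.toSet ⊆ R.toSet}.Finite :=
    fun Q0 => finite_ancestors hd hcmp hdyadic hPS hBne hvolB Q0
  set Anc : Cube d → Set (Cube d) := fun Q0 => {R | P R ∧ Q0.toSet ⊂ R.toSet} with hAncdef
  have hAnc_fin : ∀ Q0, (Anc Q0).Finite :=
    fun Q0 => (hAncW_fin Q0).subset (fun R hR => ⟨hR.1, hR.2.subset⟩)
  set g : Cube d → ℕ := fun Q0 => (Anc Q0).ncard with hgdef
  -- the chain-counting identity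
  have hgchain : ∀ Q Q' : Cube d, P Q → P Q' → Q'.toSet ⊂ Q.toSet →
      g Q' = {R : Cube d | P R ∧ Q'.toSet ⊂ R.toSet ∧ R.toSet ⊂ Q.toSet}.ncard + 1 + g Q := by
    intro Q Q' hQ hQ' hss
    set M := {R : Cube d | P R ∧ Q'.toSet ⊂ R.toSet ∧ R.toSet ⊂ Q.toSet} with hMdef
    have hMfin : M.Finite := (hAncW_fin Q').subset (fun R hR => ⟨hR.1, hR.2.1.subset⟩)
    have hsplit : Anc Q' = M ∪ ({Q} ∪ Anc Q) := by
      ext R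
      simp only [hAncdef, hMdef, Set.mem_setOf_eq, Set.mem_union, Set.mem_singleton_iff]
      constructor
      · rintro ⟨hPR, hR⟩
        rcases hcmp R (hPS R hPR) Q (hPS Q hQ) with h | h | h
        · rcases eq_or_ne R Q with rfl | hne
          · exact Or.inr (Or.inl rfl)
          · exact Or.inl ⟨hPR, hR, h.ssubset_of_ne (fun he => hne (toSet_inj hd he))⟩
        · rcases eq_or_ne R Q with rfl | hne
          · exact Or.inr (Or.inl rfl)
          · exact Or.inr (Or.inr ⟨hPR,
              h.ssubset_of_ne (fun he => hne (toSet_inj hd he.symm))⟩)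
        · exact absurd rfl (h.ne_of_mem (hR.subset (corner_mem Q')) (hss.subset (corner_mem Q')))
      · rintro (⟨hPR, h1, _⟩ | rfl | ⟨hPR, h⟩)
        · exact ⟨hPR, h1⟩
        · exact ⟨hQ, hss⟩
        · exact ⟨hPR, hss.trans h⟩
    have hdisj1 : Disjoint M ({Q} ∪ Anc Q) := by
      rw [Set.disjoint_left]
      rintro R hRM (rfl | hRA)
      · exact ssubset_irrefl _ hRM.2.2
      · exact ssubset_irrefl _ (hRM.2.2.trans hRA.2)
    have hdisj2 : Disjoint ({Q} : Set (Cube d)) (Anc Q) := by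
      rw [Set.disjoint_left]
      rintro R rfl hRA
      exact ssubset_irrefl _ hRA.2
    have : g Q' = (Anc Q').ncard := rfl
    rw [this, hsplit, Set.ncard_union_eq hdisj1 hMfin ((Set.finite_singleton Q).union (hAnc_fin Q)),
      Set.ncard_union_eq hdisj2 (Set.finite_singleton Q) (hAnc_fin Q), Set.ncard_singleton]
    simp only [hgdef]
    omega
  have hgmono : ∀ Q Q' : Cube d, P Q → P Q' → Q'.toSet ⊂ Q.toSet → g Q < g Q' := by
    intro Q Q' hQ hQ' hss
    have := hgchain Q Q' hQ hQ' hss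
    omega
  -- deep descendants, their union, and the good sets E'
  set DQ : Cube d → Set (Cube d) :=
    fun Q => {R | P R ∧ R.toSet ⊂ Q.toSet ∧ g Q + 16 ≤ g R} with hDQdef
  have hDQS : ∀ Q, DQ Q ⊆ S := fun Q R hR => hPS R hR.1
  have hDQc : ∀ Q, (DQ Q).Countable := fun Q => hScount.mono (hDQS Q)
  set U : Cube d → Set (Fin d → ℝ) :=
    fun Q => ⋃ R : (DQ Q : Set (Cube d)), (R : Cube d).toSet with hUdef
  have hUmeas : ∀ Q, MeasurableSet (U Q) := by
    intro Q
    haveI := (hDQc Q).to_subtype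
    exact MeasurableSet.iUnion (fun R => cube_meas _)
  have hUsub : ∀ Q, U Q ⊆ Q.toSet := by
    intro Q
    refine Set.iUnion_subset ?_
    rintro ⟨R, hR⟩
    exact hR.2.1.subset
  set E' : Cube d → Set (Fin d → ℝ) := fun Q => Q.toSet \ U Q with hE'def
  have hE'meas : ∀ Q, MeasurableSet (E' Q) := fun Q => (cube_meas Q).diff (hUmeas Q)

  -- the covering bound: the deep descendants cover at most 1/8 of Q
  have hT_count : ∀ Q : Cube d, {R : Cube d | P R ∧ R.toSet ⊂ Q.toSet}.Countable :=
    fun Q => hScount.mono (fun R hR => hPS R hR.1)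
  have L_cover : ∀ Q, P Q → volume (U Q) * 8 ≤ volume Q.toSet := by
    intro Q hQ
    set T := {R : Cube d | P R ∧ R.toSet ⊂ Q.toSet} with hTdef
    haveI := (hT_count Q).to_subtype
    -- pointwise: U Q is covered at least 16 times by cubes of T
    have hpoint : ∀ x ∈ U Q,
        (16 : ℝ≥0∞) ≤ ∑' R : T, (R : Cube d).toSet.indicator (1 : (Fin d → ℝ) → ℝ≥0∞) x := by
      intro x hx
      rw [hUdef] at hx
      obtain ⟨⟨Q', hQ'⟩, hxQ'⟩ := Set.mem_iUnion.1 hx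
      simp only at hxQ'
      obtain ⟨hPQ', hssQ', hgQ'⟩ := hQ'
      set M := {R : Cube d | P R ∧ Q'.toSet ⊂ R.toSet ∧ R.toSet ⊂ Q.toSet} with hMdef
      have hMcard : 15 ≤ M.ncard := by
        have h := hgchain Q Q' hQ hPQ' hssQ'
        rw [hMdef]
        omega
      have hMfin : M.Finite := (hAncW_fin Q').subset (fun R hR => ⟨hR.1, hR.2.1.subset⟩)
      have hQ'M : Q' ∉ M := fun h => ssubset_irrefl _ h.2.1
      set F := insert Q' M with hFdef
      have hFfin : F.Finite := hMfin.insert Q'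
      have hF16 : 16 ≤ F.ncard := by
        rw [hFdef, Set.ncard_insert_of_notMem hQ'M hMfin]
        omega
      have hFT : F ⊆ T := by
        rintro R (rfl | hRM)
        · exact ⟨hPQ', hssQ'⟩
        · exact ⟨hRM.1, hRM.2.2⟩
      have hxF : ∀ R ∈ F, x ∈ R.toSet := by
        rintro R (rfl | hRM)
        · exact hxQ'
        · exact hRM.2.1.subset hxQ'
      -- turn F into a finset of the subtype T
      set s : Finset T := hFfin.toFinset.subtype (· ∈ T) with hsdef
      have hscard : 16 ≤ s.card := by
        rw [hsdef, Finset.card_subtype,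
          Finset.filter_true_of_mem (fun R hR => hFT (hFfin.mem_toFinset.1 hR)),
          ← Set.ncard_eq_toFinset_card F hFfin]
        exact hF16
      calc (16 : ℝ≥0∞) ≤ (s.card : ℝ≥0∞) := by exact_mod_cast hscard
        _ = ∑ R ∈ s, (R : Cube d).toSet.indicator (1 : (Fin d → ℝ) → ℝ≥0∞) x := by
            rw [Finset.sum_congr rfl (fun R hR => ?_), Finset.sum_const, nsmul_eq_mul, mul_one]
            have hRF : (R : Cube d) ∈ F := by
              have := Finset.mem_subtype.1 hR
              exact hFfin.mem_toFinset.1 this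
            rw [Set.indicator_of_mem (hxF _ hRF), Pi.one_apply]
        _ ≤ ∑' R : T, (R : Cube d).toSet.indicator (1 : (Fin d → ℝ) → ℝ≥0∞) x :=
            ENNReal.sum_le_tsum s
    have step1 : volume (U Q) * 16 ≤ 2 * volume Q.toSet := by
      have h1 : volume (U Q) * 16 = ∫⁻ x in U Q, (16 : ℝ≥0∞) := by
        rw [setLIntegral_const]; ring
      have h2 : (∫⁻ x in U Q, (16 : ℝ≥0∞)) ≤
          ∫⁻ x in U Q, ∑' R : T, (R : Cube d).toSet.indicator (1 : (Fin d → ℝ) → ℝ≥0∞) x :=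
        setLIntegral_mono' (hUmeas Q) hpoint
      have h3 : (∫⁻ x in U Q, ∑' R : T, (R : Cube d).toSet.indicator (1 : (Fin d → ℝ) → ℝ≥0∞) x)
          ≤ ∫⁻ x, ∑' R : T, (R : Cube d).toSet.indicator (1 : (Fin d → ℝ) → ℝ≥0∞) x :=
        setLIntegral_le_lintegral _ _
      have h4 : (∫⁻ x, ∑' R : T, (R : Cube d).toSet.indicator (1 : (Fin d → ℝ) → ℝ≥0∞) x)
          = ∑' R : T, volume (R : Cube d).toSet := by
        rw [lintegral_tsum (fun R => ((measurable_one.indicator (cube_meas _)).aemeasurable))]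
        exact tsum_congr (fun R => lintegral_indicator_one (cube_meas _))
      have h5 : (∑' R : T, volume (R : Cube d).toSet) ≤ ∑' R : T, 2 * volume (E (R : Cube d)) :=
        ENNReal.tsum_le_tsum (fun R => (hEvol _ (hPS _ R.2.1)).le)
      have h6 : (∑' R : T, 2 * volume (E (R : Cube d))) = 2 * volume (⋃ R : T, E (R : Cube d)) := by
        rw [ENNReal.tsum_mul_left]
        congr 1
        refine (measure_iUnion ?_ (fun R => hEm _ (hPS _ R.2.1))).symm
        intro R1 R2 hne
        exact hEdisj (hPS _ R1.2.1) (hPS _ R2.2.1)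
          (fun he => hne (Subtype.ext he))
      have h7 : volume (⋃ R : T, E (R : Cube d)) ≤ volume Q.toSet := by
        refine measure_mono (Set.iUnion_subset ?_)
        rintro ⟨R, hR⟩
        exact (hEsub R (hPS R hR.1)).trans hR.2.1.subset
      calc volume (U Q) * 16 = ∫⁻ x in U Q, (16:ℝ≥0∞) := h1
        _ ≤ ∑' R : T, volume (R : Cube d).toSet := le_trans h2 (le_trans h3 h4.le)
        _ ≤ 2 * volume (⋃ R : T, E (R : Cube d)) := le_trans h5 h6.le
        _ ≤ 2 * volume Q.toSet := mul_le_mul_right h7 2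
    -- cancel the factor 2
    have := step1
    rw [show (16:ℝ≥0∞) = 8 * 2 by norm_num, ← mul_assoc] at this
    rw [show volume (U Q) * 8 * 2 = 2 * (volume (U Q) * 8) by ring] at this
    exact (ENNReal.mul_le_mul_iff_right (by norm_num) (by norm_num)).1 this

  -- the f-mass of the union of deep descendants
  have L_nuU : ∀ Q, P Q → ν (U Q) ≤ 4 * a * volume (U Q) := by
    intro Q hQ
    set Mx := {R : Cube d | R ∈ DQ Q ∧ ∀ R' ∈ DQ Q, R.toSet ⊆ R'.toSet → R = R'} with hMxdef
    have hMxc : Mx.Countable := (hDQc Q).mono (fun R hR => hR.1)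
    haveI := hMxc.to_subtype
    have hcover : ∀ R ∈ DQ Q, ∃ Rm ∈ Mx, R.toSet ⊆ Rm.toSet := by
      intro R hR
      set A := {R' : Cube d | R' ∈ DQ Q ∧ R.toSet ⊆ R'.toSet} with hAdef
      have hAfin : A.Finite := (hAncW_fin R).subset (fun R' hR' => ⟨hR'.1.1, hR'.2⟩)
      have hAne : A.Nonempty := ⟨R, hR, subset_rfl⟩
      obtain ⟨Rm, hRmA, hmax⟩ :=
        Set.Finite.exists_maximalFor (fun R' : Cube d => volume R'.toSet) A hAfin hAne
      refine ⟨Rm, ⟨hRmA.1, ?_⟩, hRmA.2⟩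
      intro R' hR' hsub
      exact eq_of_subset_of_vol_eq hd hsub
        (le_antisymm (measure_mono hsub) (hmax (j := R') ⟨hR', hRmA.2.trans hsub⟩ (measure_mono hsub)))
    have hUeq : U Q = ⋃ R : (Mx : Set (Cube d)), (R : Cube d).toSet := by
      apply Set.Subset.antisymm
      · rw [hUdef]
        refine Set.iUnion_subset ?_
        rintro ⟨R, hR⟩
        obtain ⟨Rm, hRm, hsub⟩ := hcover R hR
        exact hsub.trans (Set.subset_iUnion (fun R : (Mx : Set (Cube d)) => (R : Cube d).toSet) ⟨Rm, hRm⟩)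
      · refine Set.iUnion_subset ?_
        rintro ⟨R, hR⟩
        rw [hUdef]
        exact Set.subset_iUnion (fun R : (DQ Q : Set (Cube d)) => (R : Cube d).toSet) ⟨R, hR.1⟩
    have hMxdisj : Pairwise (Function.onFun Disjoint fun R : (Mx : Set (Cube d)) => (R : Cube d).toSet) := by
      rintro ⟨R1, hR1⟩ ⟨R2, hR2⟩ hne
      have hvne : R1 ≠ R2 := fun he => hne (Subtype.ext he)
      rcases hcmp R1 (hPS R1 hR1.1.1) R2 (hPS R2 hR2.1.1) with h | h | h
      · exact absurd (hR1.2 R2 hR2.1 h) hvne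
      · exact absurd (hR2.2 R1 hR1.1 h).symm hvne
      · exact h
    calc ν (U Q) = ν (⋃ R : (Mx : Set (Cube d)), (R : Cube d).toSet) := by rw [hUeq]
      _ ≤ ∑' R : (Mx : Set (Cube d)), ν (R : Cube d).toSet := measure_iUnion_le _
      _ ≤ ∑' R : (Mx : Set (Cube d)), 4 * a * volume (R : Cube d).toSet :=
          ENNReal.tsum_le_tsum (fun R => hq_high _ R.2.1.1)
      _ = 4 * a * ∑' R : (Mx : Set (Cube d)), volume (R : Cube d).toSet := ENNReal.tsum_mul_left
      _ = 4 * a * volume (U Q) := by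
          rw [hUeq, measure_iUnion hMxdisj (fun R => cube_meas _)]
  -- half of the f-mass of Q lives on E' Q
  have L_nuE' : ∀ Q, P Q → ν Q.toSet ≤ 2 * ν (E' Q) := by
    intro Q hQ
    have h1 : ν (U Q) * 2 ≤ ν Q.toSet := by
      calc ν (U Q) * 2 ≤ 4 * a * volume (U Q) * 2 := mul_le_mul_left (L_nuU Q hQ) 2
        _ = a * (volume (U Q) * 8) := by ring
        _ ≤ a * volume Q.toSet := mul_le_mul_right (L_cover Q hQ) a
        _ ≤ ν Q.toSet := hq_low Q hQ
    have h2 : ν Q.toSet ≤ ν (E' Q) + ν (U Q) := by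
      calc ν Q.toSet ≤ ν (E' Q ∪ U Q) := measure_mono (by rw [hE'def]; simp [Set.diff_union_self])
        _ ≤ ν (E' Q) + ν (U Q) := measure_union_le _ _
    have h3 : ν Q.toSet + ν Q.toSet ≤ 2 * ν (E' Q) + ν Q.toSet := by
      calc ν Q.toSet + ν Q.toSet ≤ (ν (E' Q) + ν (U Q)) + (ν (E' Q) + ν (U Q)) :=
            add_le_add h2 h2
        _ = 2 * ν (E' Q) + ν (U Q) * 2 := by ring
        _ ≤ 2 * ν (E' Q) + ν Q.toSet := add_le_add le_rfl h1
    exact (ENNReal.add_le_add_iff_right (hνne Q.toSet)).1 h3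
  -- the pointwise estimate on each cube
  have L_percube : ∀ Q, P Q → avg f Q * wInt w Q.toSet ≤
      2 * ∫⁻ y in E' Q, ENNReal.ofReal |f y| * hlMax w y := by
    intro Q hQ
    set c := wInt w Q.toSet / volume Q.toSet with hcdef
    have hc_le : ∀ y ∈ E' Q, c ≤ hlMax w y := by
      intro y hy
      have hyQ : y ∈ Q.toSet := hy.1
      have havgw : avg w Q = c := by
        rw [avg, hcdef, wInt]
        congr 1
        refine lintegral_congr (fun z => ?_)
        rw [abs_of_nonneg (hw0 z)]
      calc c = avg w Q := havgw.symm
        _ ≤ ⨆ (_ : y ∈ Q.toSet), avg w Q := le_iSup (fun _ : y ∈ Q.toSet => avg w Q) hyQ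
        _ ≤ hlMax w y := le_iSup (fun Q' : Cube d => ⨆ (_ : y ∈ Q'.toSet), avg w Q') Q
    have step0 : avg f Q * wInt w Q.toSet = ν Q.toSet * c := by
      rw [havg Q, hcdef, div_eq_mul_inv, div_eq_mul_inv]
      ring
    have step1 : ν Q.toSet * c ≤ 2 * (ν (E' Q) * c) := by
      rw [← mul_assoc]
      exact mul_le_mul_left (L_nuE' Q hQ) c
    have step2 : ν (E' Q) * c = ∫⁻ y in E' Q, ENNReal.ofReal |f y| * c := by
      rw [hν _ (hE'meas Q), lintegral_mul_const c ((hf.abs).ennreal_ofReal)]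
    have step3 : (∫⁻ y in E' Q, ENNReal.ofReal |f y| * c) ≤
        ∫⁻ y in E' Q, ENNReal.ofReal |f y| * hlMax w y :=
      setLIntegral_mono' (hE'meas Q) (fun y hy => mul_le_mul_right (hc_le y hy) _)
    calc avg f Q * wInt w Q.toSet = ν Q.toSet * c := step0
      _ ≤ 2 * (ν (E' Q) * c) := step1
      _ ≤ 2 * ∫⁻ y in E' Q, ENNReal.ofReal |f y| * hlMax w y := by
          rw [step2]; exact mul_le_mul_right step3 2
  -- disjointness of the sets E' within a residue class
  have L_disj : ∀ Q Q' : Cube d, P Q → P Q' → Q ≠ Q' → g Q % 16 = g Q' % 16 →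
      Disjoint (E' Q) (E' Q') := by
    have main : ∀ Q Q' : Cube d, P Q → P Q' → g Q % 16 = g Q' % 16 →
        Q'.toSet ⊂ Q.toSet → Disjoint (E' Q) (E' Q') := by
      intro Q Q' hQ hQ' hmod hss
      have hlt : g Q < g Q' := hgmono Q Q' hQ hQ' hss
      have hdvd : 16 ∣ g Q' - g Q := (Nat.modEq_iff_dvd' hlt.le).1 hmod
      have h16 : g Q + 16 ≤ g Q' := by
        have := Nat.le_of_dvd (by omega) hdvd
        omega
      have hmem : Q' ∈ DQ Q := ⟨hQ', hss, h16⟩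
      have hsub : E' Q' ⊆ U Q := by
        intro x hx
        have hx1 : x ∈ Q'.toSet := hx.1
        exact Set.mem_iUnion.2 ⟨⟨Q', hmem⟩, hx1⟩
      have : Disjoint (E' Q) (U Q) := by
        rw [hE'def]
        exact Set.disjoint_sdiff_left
      exact this.mono_right hsub
    intro Q Q' hQ hQ' hne hmod
    rcases hcmp Q (hPS Q hQ) Q' (hPS Q' hQ') with h | h | h
    · exact (main Q' Q hQ' hQ hmod.symm
        (h.ssubset_of_ne (fun he => hne (toSet_inj hd he)))).symm
    · exact main Q Q' hQ hQ' hmod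
        (h.ssubset_of_ne (fun he => hne (toSet_inj hd he.symm)))
    · exact (h.mono Set.diff_subset Set.diff_subset)

  -- assemble everything
  haveI : Countable S := hScount.to_subtype
  haveI hIc : Countable {Q : Cube d // P Q} :=
    Function.Injective.countable
      (f := fun Q : {Q : Cube d // P Q} => (⟨Q.1, hPS Q.1 Q.2⟩ : S))
      (fun q1 q2 h => Subtype.ext (by simpa [Subtype.ext_iff] using h))
  set F : (Fin d → ℝ) → ℝ≥0∞ := fun y => ENNReal.ofReal |f y| * hlMax w y with hFdef
  set t : {Q : Cube d // P Q} → ℝ≥0∞ :=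
    fun q => 2 * ∫⁻ y in E' q.1, F y with htdef
  set fmod : {Q : Cube d // P Q} → Fin 16 :=
    fun q => (⟨g q.1 % 16, Nat.mod_lt _ (by norm_num)⟩ : Fin 16) with hfmoddef
  have fiberbound : ∀ b : Fin 16,
      (∑' q : {q : {Q : Cube d // P Q} // fmod q = b}, t q.1) ≤ 2 * ∫⁻ y, F y := by
    intro b
    have hdisj : Pairwise (Function.onFun Disjoint fun q : {q : {Q : Cube d // P Q} // fmod q = b} =>
        E' q.1.1) := by
      rintro q1 q2 hne
      have hcne : (q1.1.1 : Cube d) ≠ q2.1.1 := by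
        intro he
        exact hne (Subtype.ext (Subtype.ext he))
      have hmod : g q1.1.1 % 16 = g q2.1.1 % 16 :=
        congrArg Fin.val (q1.2.trans q2.2.symm)
      exact L_disj _ _ q1.1.2 q2.1.2 hcne hmod
    have heq : (∑' q : {q : {Q : Cube d // P Q} // fmod q = b}, ∫⁻ y in E' q.1.1, F y)
        = ∫⁻ y, F y ∂(Measure.sum
            (fun q : {q : {Q : Cube d // P Q} // fmod q = b} => volume.restrict (E' q.1.1))) :=
      (lintegral_sum_measure F _).symm
    calc (∑' q : {q : {Q : Cube d // P Q} // fmod q = b}, t q.1)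
        = 2 * ∑' q : {q : {Q : Cube d // P Q} // fmod q = b}, ∫⁻ y in E' q.1.1, F y := by
          rw [htdef, ENNReal.tsum_mul_left]
      _ ≤ 2 * ∫⁻ y, F y := by
          refine mul_le_mul_right ?_ 2
          rw [heq, ← Measure.restrict_iUnion hdisj (fun q => hE'meas _)]
          exact lintegral_mono' Measure.restrict_le_self le_rfl
  calc (∑' Q : {Q : Cube d // P Q}, avg f (Q : Cube d) * wInt w (Q : Cube d).toSet)
      ≤ ∑' q : {Q : Cube d // P Q}, t q := ENNReal.tsum_le_tsum (fun q => L_percube q.1 q.2)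
    _ = ∑' p : (Σ b : Fin 16, {q : {Q : Cube d // P Q} // fmod q = b}), t p.2.1 :=
        ((Equiv.sigmaFiberEquiv fmod).tsum_eq t).symm
    _ = ∑' b : Fin 16, ∑' q : {q : {Q : Cube d // P Q} // fmod q = b}, t q.1 :=
        ENNReal.tsum_sigma (fun b (q : {q : {Q : Cube d // P Q} // fmod q = b}) => t q.1)
    _ ≤ ∑' b : Fin 16, 2 * ∫⁻ y, F y := ENNReal.tsum_le_tsum fiberbound
    _ = 32 * ∫⁻ y, F y := by
        rw [tsum_fintype]
        simp only [Finset.sum_const, Finset.card_univ, Fintype.card_fin, nsmul_eq_mul]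
        rw [← mul_assoc]
        norm_num




end SparseAux

/-- **Claim.** Let `w` be a weight, `G` with `0 < w(G) < ∞`, `f` bounded and compactly
supported, and `S` a sparse collection of dyadic cubes with `⟨f⟩_Q ≤ 3^d · 4 · w(G)⁻¹`
for all `Q ∈ S`. For `k ≥ -1` let `S_k = {Q ∈ S : 4^{-k-1} w(G)⁻¹ < ⟨f⟩_Q ≤ 4^{-k} w(G)⁻¹}`.
Then, with a constant independent of `k, f, w, G`,
`∑_{Q ∈ S_k} ⟨f⟩_Q w(Q) ≲ ∫ |f| Mw`. -/
theorem sparse_level_set_sum_le {d : ℕ} (hd : 0 < d) :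
    ∃ C : ℝ≥0∞, 0 < C ∧ C < ∞ ∧
      ∀ w : (Fin d → ℝ) → ℝ, Measurable w → (∀ x, 0 ≤ w x) →
        ∀ G : Set (Fin d → ℝ), 0 < wInt w G → wInt w G < ∞ →
          ∀ S : Set (Cube d), (∃ D, IsDyadicLattice D ∧ S ⊆ D) → IsSparse S →
            ∀ f : (Fin d → ℝ) → ℝ, BCS f →
              (∀ Q ∈ S, avg f Q ≤ 3 ^ d * 4 * (wInt w G)⁻¹) →
              ∀ k : ℤ, -1 ≤ k →
                (∑' Q : {Q : Cube d // Q ∈ S ∧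
                    (4 : ℝ≥0∞) ^ (-k - 1) * (wInt w G)⁻¹ < avg f Q ∧
                    avg f Q ≤ (4 : ℝ≥0∞) ^ (-k) * (wInt w G)⁻¹},
                  avg f (Q : Cube d) * wInt w (Q : Cube d).toSet) ≤
                  C * ∫⁻ y, ENNReal.ofReal |f y| * hlMax w y := by
  refine ⟨32, by norm_num, by norm_num, ?_⟩
  intro w hw hw0 G hG0 hGt S hDyadic hSparse f hBCS havgb k hk
  obtain ⟨D, hDlat, hSD⟩ := hDyadic
  obtain ⟨E, hEm', hEsub', hEvol', hEdisj⟩ := hSparse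
  obtain ⟨hfm, ⟨Cb, hCb⟩, hsupp⟩ := hBCS
  have hcmp : ∀ Q ∈ S, ∀ R ∈ S,
      Q.toSet ⊆ R.toSet ∨ R.toSet ⊆ Q.toSet ∨ Disjoint Q.toSet R.toSet :=
    fun Q hQ R hR => hDlat.2.1 Q (hSD hQ) R (hSD hR)
  have hdyadic : ∀ Q ∈ S, ∃ j : ℤ, Q.side = 2 ^ j := fun Q hQ => hDlat.1 Q (hSD hQ)
  -- countability of S
  have hScount : S.Countable := by
    have hpos : ∀ Q : S, 0 < volume (E (Q : Cube d)) := by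
      rintro ⟨Q, hQ⟩
      by_contra h
      push_neg at h
      have h0 : volume (E Q) = 0 := le_antisymm h zero_le
      have h1 := hEvol' Q hQ
      rw [h0, mul_zero] at h1
      simpa using h1
    have hcnt := MeasureTheory.Measure.countable_meas_pos_of_disjoint_iUnion
      (μ := (volume : Measure (Fin d → ℝ))) (As := fun Q : S => E (Q : Cube d))
      (fun Q => hEm' Q Q.2)
      (fun q1 q2 hne => hEdisj q1.2 q2.2 (fun h => hne (Subtype.ext h)))
    have huniv : {i : S | 0 < volume (E (i : Cube d))} = Set.univ :=
      Set.eq_univ_of_forall hpos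
    rw [huniv] at hcnt
    exact Set.countable_coe_iff.1 (Set.countable_univ_iff.1 hcnt).to_set
  -- the total f-mass is finite
  have hftot : (∫⁻ y, ENNReal.ofReal |f y|) ≠ ∞ := by
    have hb : ∀ y, ENNReal.ofReal |f y| ≤
        (tsupport f).indicator (fun _ => ENNReal.ofReal Cb) y := by
      intro y
      by_cases hy : y ∈ tsupport f
      · rw [Set.indicator_of_mem hy]
        exact ENNReal.ofReal_le_ofReal (hCb y)
      · rw [Set.indicator_of_notMem hy, image_eq_zero_of_notMem_tsupport hy]
        simp
    have : (∫⁻ y, ENNReal.ofReal |f y|) ≤ ENNReal.ofReal Cb * volume (tsupport f) := by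
      calc (∫⁻ y, ENNReal.ofReal |f y|)
          ≤ ∫⁻ y, (tsupport f).indicator (fun _ => ENNReal.ofReal Cb) y := lintegral_mono hb
        _ = ENNReal.ofReal Cb * volume (tsupport f) :=
            lintegral_indicator_const (isClosed_tsupport f).measurableSet _
    exact (lt_of_le_of_lt this
      (ENNReal.mul_lt_top ENNReal.ofReal_lt_top hsupp.measure_lt_top)).ne
  -- the scale parameter
  set a : ℝ≥0∞ := (4 : ℝ≥0∞) ^ (-k - 1) * (wInt w G)⁻¹ with hadef
  have h4zero : (4 : ℝ≥0∞) ≠ 0 := by norm_num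
  have h4top : (4 : ℝ≥0∞) ≠ ∞ := by norm_num
  have ha0 : a ≠ 0 :=
    mul_ne_zero (ENNReal.zpow_pos h4zero h4top _).ne' (ENNReal.inv_ne_zero.2 hGt.ne)
  have haT : a ≠ ∞ :=
    ENNReal.mul_ne_top (ENNReal.zpow_lt_top h4zero h4top _).ne (ENNReal.inv_ne_top.2 hG0.ne')
  have h4a : (4 : ℝ≥0∞) ^ (-k) * (wInt w G)⁻¹ = 4 * a := by
    have h1 := ENNReal.zpow_add h4zero h4top 1 (-k - 1)
    rw [zpow_one, show (1 : ℤ) + (-k - 1) = -k by ring] at h1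
    rw [hadef, ← mul_assoc, h1]
  have hP : ∀ Q : Cube d, (Q ∈ S ∧
      (4 : ℝ≥0∞) ^ (-k - 1) * (wInt w G)⁻¹ < avg f Q ∧
      avg f Q ≤ (4 : ℝ≥0∞) ^ (-k) * (wInt w G)⁻¹) →
      Q ∈ S ∧ a < avg f Q ∧ avg f Q ≤ 4 * a := by
    intro Q hQ
    exact ⟨hQ.1, hQ.2.1, h4a ▸ hQ.2.2⟩
  exact SparseAux.key hd hcmp hdyadic hScount hEm' hEsub' hEvol' hEdisj hw0 hfm hftot ha0 haT hP
end
end
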